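/- Let S : ℝ → ℝⁿ be differentiable with d/dt (½‖S(t)‖²) ≤ -η‖S(t)‖ for some η > 0 whenever S(t) ≠ 0. Then S reaches zero in finite time: there exists T ≤ ‖S(0)‖/η such that S(T) = 0. -/

import Mathlib

open Real

theorem stmt9 (n : ℕ) (S : ℝ → EuclideanSpace ℝ (Fin n)) (η : ℝ)
    (hη : 0 < η) (hdiff : Differentiable ℝ S)
    (hineq : ∀ t : ℝ, S t ≠ 0 →
      deriv (fun τ => (1/2) * ‖S τ‖^2) t ≤ -η * ‖S t‖) :
    ∃ T : ℝ, 0 ≤ T ∧ T ≤ ‖S 0‖ / η ∧ S T = 0 := by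
  by_cases h0 : S 0 = 0
  · exact ⟨0, le_refl 0, by positivity, h0⟩
  set T₀ := ‖S 0‖ / η with hT₀
  have hS0 : 0 < ‖S 0‖ := norm_pos_iff.mpr h0
  have hT₀pos : 0 < T₀ := div_pos hS0 hη
  by_contra hc
  push_neg at hc
  have hne : ∀ t ∈ Set.Icc (0:ℝ) T₀, S t ≠ 0 := fun t ht => hc t ht.1 ht.2
  have key : ∀ t ∈ Set.Icc (0:ℝ) T₀,
      HasDerivAt (fun τ => ‖S τ‖ + η * τ) (deriv (fun τ => ‖S τ‖) t + η) t ∧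
      deriv (fun τ => ‖S τ‖) t + η ≤ 0 := by
    intro t ht
    have hSt : S t ≠ 0 := hne t ht
    have hpos : 0 < ‖S t‖ := norm_pos_iff.mpr hSt
    have hg : DifferentiableAt ℝ (fun τ => ‖S τ‖) t := (hdiff t).norm ℝ hSt
    set g' := deriv (fun τ => ‖S τ‖) t with hg'
    have hgd : HasDerivAt (fun τ => ‖S τ‖) g' t := hg.hasDerivAt
    have hf : HasDerivAt (fun τ => (1/2) * ‖S τ‖^2)
        ((1/2) * ((2:ℕ) * ‖S t‖ ^ (2-1) * g')) t := (hgd.pow 2).const_mul (1/2)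
    have hfd := hf.deriv
    have hin := hineq t hSt
    rw [hfd] at hin
    simp only [pow_one, Nat.cast_ofNat] at hin
    have hgle : g' + η ≤ 0 := by nlinarith
    have hh : HasDerivAt (fun τ => ‖S τ‖ + η * τ) (g' + η) t := by
      have : HasDerivAt (fun τ : ℝ => η * τ) η t := by
        simpa using (hasDerivAt_id t).const_mul η
      exact hgd.add this
    exact ⟨hh, hgle⟩
  have hcont : ContinuousOn (fun τ => ‖S τ‖ + η * τ) (Set.Icc 0 T₀) :=
    (hdiff.continuous.norm.add (continuous_const.mul continuous_id)).continuousOn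
  have hdiffOn : DifferentiableOn ℝ (fun τ => ‖S τ‖ + η * τ)
      (interior (Set.Icc (0:ℝ) T₀)) := by
    rw [interior_Icc]
    intro t ht
    exact ((key t ⟨le_of_lt ht.1, le_of_lt ht.2⟩).1.differentiableAt).differentiableWithinAt
  have hderiv : ∀ t ∈ interior (Set.Icc (0:ℝ) T₀),
      deriv (fun τ => ‖S τ‖ + η * τ) t ≤ 0 := by
    rw [interior_Icc]
    intro t ht
    have h := key t ⟨le_of_lt ht.1, le_of_lt ht.2⟩
    rw [h.1.deriv]
    exact h.2
  have hanti : AntitoneOn (fun τ => ‖S τ‖ + η * τ) (Set.Icc 0 T₀) :=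
    antitoneOn_of_deriv_nonpos (convex_Icc 0 T₀) hcont hdiffOn hderiv
  have h1 : ‖S T₀‖ + η * T₀ ≤ ‖S 0‖ + η * 0 :=
    hanti ⟨le_refl 0, le_of_lt hT₀pos⟩ ⟨le_of_lt hT₀pos, le_refl T₀⟩ (le_of_lt hT₀pos)
  have hηT : η * T₀ = ‖S 0‖ := by rw [hT₀]; field_simp [hη.ne']
  have hTpos : 0 < ‖S T₀‖ := norm_pos_iff.mpr (hne T₀ ⟨le_of_lt hT₀pos, le_refl T₀⟩)
  linarith
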